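/- Let E be a real normed vector space of finite dimension m ≥ 1, let B = closedBall(c,R) with R > 0, let σ ∈ (0,1], k ≥ 1, and set δ = R·(σ/(2k²))^{1/m}. Suppose each request r_t (t = 1,…,T) is a tuple of k_t ≤ k points of B, generated adaptively so that, conditionally on all previous requests, each coordinate of r_t has a distribution that is (almost surely) σ-smooth with respect to B. Then for every start point p_0 ∈ B, the expected optimal offline cost for chasing these sets satisfies E[opt] ≥ (δ/2)·T = (R/2)·(σ/(2k²))^{1/m}·T. -/

import Mathlib

open MeasureTheory Metric Filter Topology
open scoped ENNReal

lemma ratio_bound_aux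
    {E : Type*} [NormedAddCommGroup E] [NormedSpace ℝ E]
    [MeasurableSpace E] [BorelSpace E] [FiniteDimensional ℝ E]
    {m : ℕ} (hdim : Module.finrank ℝ E = m)
    (vol : Measure E) [vol.IsAddHaarMeasure]
    (c z : E) {R ρ σ : ℝ} (hR : 0 < R) (hρ : 0 ≤ ρ) (hσ0 : 0 < σ) :
    (vol (closedBall z ρ ∩ closedBall c R)).toReal / (σ * (vol (closedBall c R)).toReal) ≤
      (ρ / R) ^ m / σ := by
  have hU0 : 0 < (vol (closedBall (0:E) 1)).toReal :=
    ENNReal.toReal_pos (measure_closedBall_pos vol 0 one_pos).ne' measure_closedBall_lt_top.ne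
  set Ut := (vol (closedBall (0:E) 1)).toReal with hUt
  have hB : (vol (closedBall c R)).toReal = R ^ m * Ut := by
    rw [Measure.addHaar_closedBall' vol c hR.le, hdim, ENNReal.toReal_mul,
      ENNReal.toReal_ofReal (by positivity)]
  have hnum : (vol (closedBall z ρ ∩ closedBall c R)).toReal ≤ ρ ^ m * Ut := by
    have h1 : vol (closedBall z ρ ∩ closedBall c R) ≤ vol (closedBall z ρ) :=
      measure_mono Set.inter_subset_left
    have h2 : (vol (closedBall z ρ)).toReal = ρ ^ m * Ut := by
      rw [Measure.addHaar_closedBall' vol z hρ, hdim, ENNReal.toReal_mul,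
        ENNReal.toReal_ofReal (by positivity)]
    calc (vol (closedBall z ρ ∩ closedBall c R)).toReal
        ≤ (vol (closedBall z ρ)).toReal :=
          ENNReal.toReal_mono measure_closedBall_lt_top.ne h1
      _ = ρ ^ m * Ut := h2
  rw [hB]
  have heq : (ρ / R) ^ m / σ = (ρ ^ m * Ut) / (σ * (R ^ m * Ut)) := by
    rw [div_pow]
    field_simp
  rw [heq]
  exact div_le_div_of_nonneg_right hnum (by positivity) |>.trans_eq rfl

lemma pair_bound_aux
    {E : Type*} [NormedAddCommGroup E] [NormedSpace ℝ E]
    [MeasurableSpace E] [BorelSpace E] [FiniteDimensional ℝ E]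
    {m : ℕ} (hdim : Module.finrank ℝ E = m)
    (vol : Measure E) [vol.IsAddHaarMeasure]
    (c : E) {R : ℝ} (hR : 0 < R) {σ : ℝ} (hσ0 : 0 < σ)
    {Ω : Type*} {mF m0 : MeasurableSpace Ω} (hmF : mF ≤ m0)
    (P : Measure Ω) [IsProbabilityMeasure P]
    {X : Ω → E} (hX : Measurable X)
    (hXsupp : ∀ᵐ ω ∂P, X ω ∈ closedBall c R)
    (hXsmooth : ∀ S : Set E, S ⊆ closedBall c R → MeasurableSet S →
      ∀ᵐ ω ∂P, (P[fun ω' => S.indicator (fun _ => (1 : ℝ)) (X ω') | mF]) ω ≤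
          (vol S).toReal / (σ * (vol (closedBall c R)).toReal))
    {q : Ω → E} (hq : Measurable[mF] q) {δ : ℝ} (hδ : 0 ≤ δ) :
    P {ω | dist (X ω) (q ω) ≤ δ} ≤ ENNReal.ofReal ((δ / R) ^ m / σ) := by
  have hq0 : Measurable q := hq.mono hmF le_rfl
  have key : ∀ ε : ℝ, 0 < ε →
      P {ω | dist (X ω) (q ω) ≤ δ} ≤ ENNReal.ofReal (((δ + ε) / R) ^ m / σ) := by
    intro ε hε
    set c0 : ℝ := ((δ + ε) / R) ^ m / σ with hc0def
    have hc0 : 0 ≤ c0 := by positivity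
    obtain ⟨u, hu⟩ : ∃ u : ℕ → E, DenseRange u :=
      ⟨TopologicalSpace.denseSeq E, TopologicalSpace.denseRange_denseSeq E⟩
    set D : ℕ → Set E := fun n => ball (u n) (ε / 2) with hD
    set C : ℕ → Set E := disjointed D with hC
    have hCmeas : ∀ n, MeasurableSet (C n) :=
      MeasurableSet.disjointed fun n => measurableSet_ball
    have hCsub : ∀ n, C n ⊆ D n := fun n => disjointed_subset D n
    have hCcover : ∀ x : E, ∃ n, x ∈ C n := by
      intro x
      have : x ∈ ⋃ n, C n := by
        rw [hC, iUnion_disjointed]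
        obtain ⟨n, hn⟩ := hu.exists_dist_lt x (by positivity : (0:ℝ) < ε / 2)
        exact Set.mem_iUnion.2 ⟨n, by simpa [hD, dist_comm] using hn⟩
      exact Set.mem_iUnion.1 this
    set S : ℕ → Set E := fun n => closedBall (u n) (δ + ε) ∩ closedBall c R with hS
    have hSmeas : ∀ n, MeasurableSet (S n) := fun n =>
      measurableSet_closedBall.inter measurableSet_closedBall
    have hSsub : ∀ n, S n ⊆ closedBall c R := fun n => Set.inter_subset_right
    -- step 1
    have step1 : P {ω | dist (X ω) (q ω) ≤ δ} ≤ ∑' n, P (X ⁻¹' S n ∩ q ⁻¹' C n) := by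
      have hsub : {ω | dist (X ω) (q ω) ≤ δ} ≤ᵐ[P] ⋃ n, (X ⁻¹' S n ∩ q ⁻¹' C n) := by
        filter_upwards [hXsupp] with ω hωB hω
        obtain ⟨n, hn⟩ := hCcover (q ω)
        refine Set.mem_iUnion.2 ⟨n, ⟨⟨?_, hωB⟩, hn⟩⟩
        have hdist : dist (X ω) (q ω) ≤ δ := hω
        have hqd : dist (q ω) (u n) < ε / 2 := by
          have := hCsub n hn; simpa [hD, mem_ball] using this
        have : dist (X ω) (u n) ≤ δ + ε / 2 :=
          (dist_triangle (X ω) (q ω) (u n)).trans (by linarith)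
        exact mem_closedBall.2 (this.trans (by linarith))
      calc P {ω | dist (X ω) (q ω) ≤ δ} ≤ P (⋃ n, (X ⁻¹' S n ∩ q ⁻¹' C n)) :=
            measure_mono_ae hsub
        _ ≤ ∑' n, P (X ⁻¹' S n ∩ q ⁻¹' C n) := measure_iUnion_le _
    -- step 2
    have step2 : ∀ n, P (X ⁻¹' S n ∩ q ⁻¹' C n) ≤ ENNReal.ofReal c0 * P (q ⁻¹' C n) := by
      intro n
      set A : Set Ω := q ⁻¹' C n with hA
      have hAmF : MeasurableSet[mF] A := hq (hCmeas n)
      have hAm0 : MeasurableSet A := hmF _ hAmF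
      set bnd : ℝ := (vol (S n)).toReal / (σ * (vol (closedBall c R)).toReal) with hbnd
      have hbnd0 : 0 ≤ bnd := by
        apply div_nonneg ENNReal.toReal_nonneg
        positivity
      have hbnd_le : bnd ≤ c0 := ratio_bound_aux hdim vol c (u n) hR (by linarith) hσ0
      have hfeq : (fun ω => (S n).indicator (fun _ => (1:ℝ)) (X ω)) =
          (X ⁻¹' S n).indicator (fun _ => (1:ℝ)) := by
        funext ω; rfl
      have hf_int : Integrable (fun ω => (S n).indicator (fun _ => (1:ℝ)) (X ω)) P := by
        rw [hfeq]; exact (integrable_const (1:ℝ)).indicator (hX (hSmeas n))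
      have hreal : (P (X ⁻¹' S n ∩ A)).toReal ≤ c0 * (P A).toReal := by
        have e1 : (P (X ⁻¹' S n ∩ A)).toReal
            = ∫ ω in A, (fun ω' => (S n).indicator (fun _ => (1:ℝ)) (X ω')) ω ∂P := by
          rw [hfeq, integral_indicator_const (1:ℝ) (hX (hSmeas n)),
            measureReal_restrict_apply (hX (hSmeas n)), smul_eq_mul, mul_one, measureReal_def]
        have e2 : ∫ ω in A, (fun ω' => (S n).indicator (fun _ => (1:ℝ)) (X ω')) ω ∂P
            = ∫ ω in A, (P[fun ω' => (S n).indicator (fun _ => (1:ℝ)) (X ω') | mF]) ω ∂P :=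
          (setIntegral_condExp hmF hf_int hAmF).symm
        have e3 : ∫ ω in A, (P[fun ω' => (S n).indicator (fun _ => (1:ℝ)) (X ω') | mF]) ω ∂P
            ≤ ∫ _ω in A, bnd ∂P := by
          apply integral_mono_ae integrable_condExp.integrableOn (integrableOn_const (C := bnd) (measure_ne_top _ _))
          · exact ae_restrict_of_ae (hXsmooth (S n) (hSsub n) (hSmeas n))
        have e4 : ∫ _ω in A, bnd ∂P = bnd * (P A).toReal := by
          rw [setIntegral_const, smul_eq_mul, mul_comm, measureReal_def]
        calc (P (X ⁻¹' S n ∩ A)).toReal = _ := e1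
          _ ≤ ∫ _ω in A, bnd ∂P := e2.le.trans e3
          _ = bnd * (P A).toReal := e4
          _ ≤ c0 * (P A).toReal := mul_le_mul_of_nonneg_right hbnd_le ENNReal.toReal_nonneg
      calc P (X ⁻¹' S n ∩ A) = ENNReal.ofReal ((P (X ⁻¹' S n ∩ A)).toReal) :=
            (ENNReal.ofReal_toReal (measure_ne_top _ _)).symm
        _ ≤ ENNReal.ofReal (c0 * (P A).toReal) := ENNReal.ofReal_le_ofReal hreal
        _ = ENNReal.ofReal c0 * ENNReal.ofReal ((P A).toReal) := ENNReal.ofReal_mul hc0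
        _ = ENNReal.ofReal c0 * P A := by rw [ENNReal.ofReal_toReal (measure_ne_top _ _)]
    -- step 3
    have step3 : ∑' n, P (X ⁻¹' S n ∩ q ⁻¹' C n) ≤ ENNReal.ofReal c0 := by
      calc ∑' n, P (X ⁻¹' S n ∩ q ⁻¹' C n) ≤ ∑' n, ENNReal.ofReal c0 * P (q ⁻¹' C n) :=
            ENNReal.tsum_le_tsum step2
        _ = ENNReal.ofReal c0 * ∑' n, P (q ⁻¹' C n) := ENNReal.tsum_mul_left
        _ = ENNReal.ofReal c0 * P (⋃ n, q ⁻¹' C n) := by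
            rw [measure_iUnion (fun i j hij => ((disjoint_disjointed D) hij).preimage q)
              (fun n => hmF _ (hq (hCmeas n)))]
        _ ≤ ENNReal.ofReal c0 * 1 := by
            gcongr
            exact (measure_mono (Set.subset_univ _)).trans_eq measure_univ
        _ = ENNReal.ofReal c0 := mul_one _
    exact step1.trans step3
  -- limit ε → 0⁺
  have cont : Tendsto (fun ε : ℝ => ENNReal.ofReal (((δ + ε) / R) ^ m / σ)) (𝓝[>] 0)
      (𝓝 (ENNReal.ofReal ((δ / R) ^ m / σ))) := by
    have h1 : Continuous (fun ε : ℝ => ((δ + ε) / R) ^ m / σ) := by fun_prop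
    have h2 : Tendsto (fun ε : ℝ => ENNReal.ofReal (((δ + ε) / R) ^ m / σ)) (𝓝 0)
        (𝓝 (ENNReal.ofReal ((δ / R) ^ m / σ))) := by
      have := (ENNReal.continuous_ofReal.comp h1).tendsto 0
      simpa [Function.comp_def] using this
    exact h2.mono_left nhdsWithin_le_nhds
  refine ge_of_tendsto cont ?_
  filter_upwards [self_mem_nhdsWithin] with ε hε
  exact key ε hε

/-- The serving path determined by a choice function `χ`. -/
def pathAux {E : Type*} (p₀ : E) (T : ℕ) (kt : ℕ → ℕ) (rv : (t : ℕ) → Fin (kt t) → E)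
    (χ : ∀ t : (Finset.Icc 1 T : Finset ℕ), Fin (kt t)) (s : ℕ) : E :=
  if h : s ∈ Finset.Icc 1 T then rv s (χ ⟨s, h⟩) else p₀

/-- The cost of the serving path determined by a choice function `χ`. -/
def costAux {E : Type*} [PseudoMetricSpace E] (p₀ : E) (T : ℕ) (kt : ℕ → ℕ)
    (rv : (t : ℕ) → Fin (kt t) → E)
    (χ : ∀ t : (Finset.Icc 1 T : Finset ℕ), Fin (kt t)) : ℝ :=
  ∑ t ∈ Finset.Icc 1 T, dist (pathAux p₀ T kt rv χ (t - 1)) (pathAux p₀ T kt rv χ t)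

lemma sInf_eq_iInf_costAux {E : Type*} [PseudoMetricSpace E] (p₀ : E) (T : ℕ)
    (kt : ℕ → ℕ) (rv : (t : ℕ) → Fin (kt t) → E) :
    sInf {x : ℝ | ∃ p : ℕ → E, p 0 = p₀ ∧
        (∀ t ∈ Finset.Icc 1 T, ∃ i, p t = rv t i) ∧
        x = ∑ t ∈ Finset.Icc 1 T, dist (p (t - 1)) (p t)} =
      ⨅ χ : ∀ t : (Finset.Icc 1 T : Finset ℕ), Fin (kt t), costAux p₀ T kt rv χ := by
  have h0 : (0 : ℕ) ∉ Finset.Icc 1 T := by simp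
  have hset : {x : ℝ | ∃ p : ℕ → E, p 0 = p₀ ∧
        (∀ t ∈ Finset.Icc 1 T, ∃ i, p t = rv t i) ∧
        x = ∑ t ∈ Finset.Icc 1 T, dist (p (t - 1)) (p t)} =
      Set.range (costAux p₀ T kt rv) := by
    ext x
    constructor
    · rintro ⟨p, hp0, hsel, rfl⟩
      refine ⟨fun t => Classical.choose (hsel t t.2), ?_⟩
      unfold costAux
      refine Finset.sum_congr rfl fun t ht => ?_
      have hpt : ∀ s (hs : s ∈ Finset.Icc 1 T),
          pathAux p₀ T kt rv (fun u => Classical.choose (hsel u u.2)) s = p s := by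
        intro s hs
        unfold pathAux
        rw [dif_pos hs]
        exact (Classical.choose_spec (hsel s hs)).symm
      rw [hpt t ht]
      by_cases h : t - 1 ∈ Finset.Icc 1 T
      · rw [hpt (t - 1) h]
      · have ht' := Finset.mem_Icc.mp ht
        have h1 : t - 1 = 0 := by
          by_contra hne
          exact h (Finset.mem_Icc.mpr ⟨Nat.one_le_iff_ne_zero.mpr hne, le_trans (Nat.sub_le t 1) ht'.2⟩)
        unfold pathAux
        rw [dif_neg h, h1, hp0]
    · rintro ⟨χ, rfl⟩
      exact ⟨pathAux p₀ T kt rv χ, by unfold pathAux; rw [dif_neg h0],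
        fun t ht => ⟨χ ⟨t, ht⟩, by unfold pathAux; rw [dif_pos ht]⟩, rfl⟩
  rw [hset, sInf_range]

/-- Lemma 3.3 of the paper, deterministic horizon `T`.
Let `E` be a real normed vector space of finite dimension `m ≥ 1`, let `B = closedBall c R`
with `R > 0`, `σ ∈ (0,1]`, `k ≥ 1`, and set `δ = R·(σ/(2k²))^{1/m}`. Suppose each request
`r t` (for `t = 1, …, T`) is a tuple of `kt t ≤ k` points of `B`, generated adaptively
(adapted to a filtration `F` recording all previous requests) so that, conditionally on
`F (t-1)`, each coordinate of `r t` has an almost surely `σ`-smooth distribution with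
respect to `B`. Then for every start point `p₀ ∈ B`, the expected optimal offline cost for
chasing these sets is at least `(δ/2)·T`. -/
theorem chasing_small_sets_smoothed_opt_lower_bound
    {E : Type*} [NormedAddCommGroup E] [NormedSpace ℝ E]
    [MeasurableSpace E] [BorelSpace E] [FiniteDimensional ℝ E]
    {m : ℕ} (hm : 1 ≤ m) (hdim : Module.finrank ℝ E = m)
    (vol : Measure E) [vol.IsAddHaarMeasure]
    (c : E) {R : ℝ} (hR : 0 < R) {σ : ℝ} (hσ0 : 0 < σ) (hσ1 : σ ≤ 1)
    {k : ℕ} (hk : 1 ≤ k)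
    {δ : ℝ} (hδ : δ = R * (σ / (2 * (k : ℝ) ^ 2)) ^ ((1 : ℝ) / m))
    {Ω : Type*} {m0 : MeasurableSpace Ω} (P : Measure Ω) [IsProbabilityMeasure P]
    (T : ℕ) (F : Filtration ℕ m0)
    (kt : ℕ → ℕ) (hkt : ∀ t ∈ Finset.Icc 1 T, 1 ≤ kt t ∧ kt t ≤ k)
    (r : (t : ℕ) → Fin (kt t) → Ω → E)
    (hadapted : ∀ t ∈ Finset.Icc 1 T, ∀ i, Measurable[F t] (r t i))
    (hsupp : ∀ t ∈ Finset.Icc 1 T, ∀ i, ∀ᵐ ω ∂P, r t i ω ∈ closedBall c R)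
    (hsmooth : ∀ t ∈ Finset.Icc 1 T, ∀ i,
      ∀ S : Set E, S ⊆ closedBall c R → MeasurableSet S →
      ∀ᵐ ω ∂P,
        (P[fun ω' => S.indicator (fun _ => (1 : ℝ)) (r t i ω') | F (t - 1)]) ω ≤
          (vol S).toReal / (σ * (vol (closedBall c R)).toReal))
    (p₀ : E) (hp₀ : p₀ ∈ closedBall c R) :
    (δ / 2) * T ≤
      ∫ ω, sInf {x : ℝ | ∃ p : ℕ → E, p 0 = p₀ ∧
        (∀ t ∈ Finset.Icc 1 T, ∃ i, p t = r t i ω) ∧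
        x = ∑ t ∈ Finset.Icc 1 T, dist (p (t - 1)) (p t)} ∂P := by
  classical
  have hk0 : (0:ℝ) < (k:ℝ) := by exact_mod_cast hk
  have hbase_pos : 0 < σ / (2 * (k:ℝ)^2) := by positivity
  have hδ0 : 0 < δ := by
    rw [hδ]; exact mul_pos hR (Real.rpow_pos_of_pos hbase_pos _)
  have hmne : (m:ℝ) ≠ 0 := by positivity
  have hratio : (δ / R) ^ m / σ = 1 / (2 * (k:ℝ)^2) := by
    have h1 : δ / R = (σ / (2*(k:ℝ)^2)) ^ ((1:ℝ)/m) := by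
      rw [hδ]; field_simp
    rw [h1, ← Real.rpow_natCast ((σ / (2*(k:ℝ)^2)) ^ ((1:ℝ)/m)) m,
      ← Real.rpow_mul hbase_pos.le, one_div, inv_mul_cancel₀ hmne, Real.rpow_one]
    field_simp
  -- measurability of the requests w.r.t. the ambient σ-algebra
  have hrmeas : ∀ t ∈ Finset.Icc 1 T, ∀ i, Measurable (r t i) :=
    fun t ht i => (hadapted t ht i).mono (F.le t) le_rfl
  -- the good events
  set A : ℕ → Set Ω := fun t =>
    if t = 1 then {ω | ∀ i : Fin (kt 1), δ < dist (r 1 i ω) p₀}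
    else {ω | ∀ (i : Fin (kt t)) (j : Fin (kt (t-1))), δ < dist (r t i ω) (r (t-1) j ω)}
    with hAdef
  have hA1 : A 1 = {ω | ∀ i : Fin (kt 1), δ < dist (r 1 i ω) p₀} := by
    rw [hAdef]; simp
  have hAt : ∀ t, t ≠ 1 → A t =
      {ω | ∀ (i : Fin (kt t)) (j : Fin (kt (t-1))), δ < dist (r t i ω) (r (t-1) j ω)} := by
    intro t h1; rw [hAdef]; simp [h1]
  have hAmeas : ∀ t ∈ Finset.Icc 1 T, MeasurableSet (A t) := by
    intro t ht
    rcases eq_or_ne t 1 with h1 | h1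
    · subst h1
      rw [hA1]
      have : {ω | ∀ i : Fin (kt 1), δ < dist (r 1 i ω) p₀}
          = ⋂ i : Fin (kt 1), {ω | δ < dist (r 1 i ω) p₀} := by ext ω; simp
      rw [this]
      exact MeasurableSet.iInter fun i =>
        measurableSet_lt measurable_const ((hrmeas 1 ht i).dist measurable_const)
    · have ht2 := Finset.mem_Icc.mp ht
      have h2 : 2 ≤ t := by omega
      have ht' : t - 1 ∈ Finset.Icc 1 T := Finset.mem_Icc.mpr ⟨by omega, by omega⟩
      rw [hAt t h1]
      have : {ω | ∀ (i : Fin (kt t)) (j : Fin (kt (t-1))), δ < dist (r t i ω) (r (t-1) j ω)}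
          = ⋂ (i : Fin (kt t)) (j : Fin (kt (t-1))), {ω | δ < dist (r t i ω) (r (t-1) j ω)} := by
        ext ω; simp
      rw [this]
      exact MeasurableSet.iInter fun i => MeasurableSet.iInter fun j =>
        measurableSet_lt measurable_const ((hrmeas t ht i).dist (hrmeas (t-1) ht' j))
  -- per-pair probability bound
  have hpair : ∀ t ∈ Finset.Icc 1 T, ∀ (i : Fin (kt t)) (q : Ω → E),
      Measurable[F (t-1)] q →
      P {ω | dist (r t i ω) (q ω) ≤ δ} ≤ ENNReal.ofReal (1/(2*(k:ℝ)^2)) := by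
    intro t ht i q hq
    have := pair_bound_aux hdim vol c hR hσ0 (F.le (t-1)) P (hrmeas t ht i)
      (hsupp t ht i) (hsmooth t ht i) hq hδ0.le
    rwa [hratio] at this
  -- bound on N · (1/(2k²)) for N ≤ k²
  have hmulbound : ∀ N : ℕ, N ≤ k * k →
      (N : ℝ≥0∞) * ENNReal.ofReal (1/(2*(k:ℝ)^2)) ≤ ENNReal.ofReal (1/2) := by
    intro N hN
    calc (N : ℝ≥0∞) * ENNReal.ofReal (1/(2*(k:ℝ)^2))
        ≤ ((k*k : ℕ) : ℝ≥0∞) * ENNReal.ofReal (1/(2*(k:ℝ)^2)) :=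
          mul_le_mul_left (by exact_mod_cast hN) _
      _ = ENNReal.ofReal (((k*k : ℕ) : ℝ) * (1/(2*(k:ℝ)^2))) := by
          rw [ENNReal.ofReal_mul (by positivity), ENNReal.ofReal_natCast]
      _ = ENNReal.ofReal (1/2) := by
          congr 1
          push_cast
          field_simp
  -- the complements of the good events are unlikely
  have hAc : ∀ t ∈ Finset.Icc 1 T, P ((A t)ᶜ) ≤ ENNReal.ofReal (1/2) := by
    intro t ht
    have ht2 := Finset.mem_Icc.mp ht
    rcases eq_or_ne t 1 with h1 | h1
    · subst h1
      have hsub : (A 1)ᶜ ⊆ ⋃ i : Fin (kt 1), {ω | dist (r 1 i ω) p₀ ≤ δ} := by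
        intro ω hω
        rw [hA1] at hω
        simp only [Set.mem_compl_iff, Set.mem_setOf_eq, not_forall, not_lt] at hω
        obtain ⟨i, hi⟩ := hω
        exact Set.mem_iUnion.2 ⟨i, hi⟩
      calc P ((A 1)ᶜ) ≤ ∑ i : Fin (kt 1), P {ω | dist (r 1 i ω) p₀ ≤ δ} :=
            (measure_mono hsub).trans (measure_iUnion_fintype_le _ _)
        _ ≤ ∑ _i : Fin (kt 1), ENNReal.ofReal (1/(2*(k:ℝ)^2)) :=
            Finset.sum_le_sum fun i _ => hpair 1 ht i (fun _ => p₀) measurable_const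
        _ = (kt 1 : ℝ≥0∞) * ENNReal.ofReal (1/(2*(k:ℝ)^2)) := by
            rw [Finset.sum_const, Finset.card_univ, Fintype.card_fin, nsmul_eq_mul]
        _ ≤ ENNReal.ofReal (1/2) := hmulbound (kt 1) (le_trans (hkt 1 ht).2 (Nat.le_mul_of_pos_left k (by omega)))
    · have h2 : 2 ≤ t := by omega
      have ht' : t - 1 ∈ Finset.Icc 1 T := Finset.mem_Icc.mpr ⟨by omega, by omega⟩
      have hsub : (A t)ᶜ ⊆ ⋃ (i : Fin (kt t)) (j : Fin (kt (t-1))),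
          {ω | dist (r t i ω) (r (t-1) j ω) ≤ δ} := by
        intro ω hω
        rw [hAt t h1] at hω
        simp only [Set.mem_compl_iff, Set.mem_setOf_eq, not_forall, not_lt] at hω
        obtain ⟨i, j, hij⟩ := hω
        exact Set.mem_iUnion.2 ⟨i, Set.mem_iUnion.2 ⟨j, hij⟩⟩
      calc P ((A t)ᶜ)
          ≤ ∑ i : Fin (kt t), P (⋃ j : Fin (kt (t-1)), {ω | dist (r t i ω) (r (t-1) j ω) ≤ δ}) :=
            (measure_mono hsub).trans (measure_iUnion_fintype_le _ _)
        _ ≤ ∑ i : Fin (kt t), ∑ j : Fin (kt (t-1)), P {ω | dist (r t i ω) (r (t-1) j ω) ≤ δ} :=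
            Finset.sum_le_sum fun i _ => measure_iUnion_fintype_le _ _
        _ ≤ ∑ _i : Fin (kt t), ∑ _j : Fin (kt (t-1)), ENNReal.ofReal (1/(2*(k:ℝ)^2)) :=
            Finset.sum_le_sum fun i _ => Finset.sum_le_sum fun j _ =>
              hpair t ht i (r (t-1) j) (hadapted (t-1) ht' j)
        _ = ((kt t * kt (t-1) : ℕ) : ℝ≥0∞) * ENNReal.ofReal (1/(2*(k:ℝ)^2)) := by
            rw [Finset.sum_const, Finset.sum_const, Finset.card_univ, Finset.card_univ,
              Fintype.card_fin, Fintype.card_fin, smul_smul, nsmul_eq_mul]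
        _ ≤ ENNReal.ofReal (1/2) :=
            hmulbound _ (Nat.mul_le_mul (hkt t ht).2 (hkt (t-1) ht').2)
  -- the good events have probability at least 1/2
  have hPA : ∀ t ∈ Finset.Icc 1 T, (1:ℝ)/2 ≤ (P (A t)).toReal := by
    intro t ht
    have h1 : (P ((A t)ᶜ)).toReal ≤ 1/2 := by
      have := ENNReal.toReal_mono ENNReal.ofReal_ne_top (hAc t ht)
      rwa [ENNReal.toReal_ofReal (by norm_num)] at this
    have hadd : P (A t) + P ((A t)ᶜ) = 1 := prob_add_prob_compl (hAmeas t ht)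
    have h2 := congrArg ENNReal.toReal hadd
    rw [ENNReal.toReal_add (measure_ne_top _ _) (measure_ne_top _ _), ENNReal.toReal_one] at h2
    linarith
  -- the optimum as a finite infimum over choice functions
  haveI hne : Nonempty (∀ t : (Finset.Icc 1 T : Finset ℕ), Fin (kt ↑t)) :=
    ⟨fun t => ⟨0, (hkt t t.2).1⟩⟩
  set cost : (∀ t : (Finset.Icc 1 T : Finset ℕ), Fin (kt ↑t)) → Ω → ℝ :=
    fun χ ω => costAux p₀ T kt (fun t i => r t i ω) χ with hcostdef
  have hinf : ∀ ω, sInf {x : ℝ | ∃ p : ℕ → E, p 0 = p₀ ∧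
      (∀ t ∈ Finset.Icc 1 T, ∃ i, p t = r t i ω) ∧
      x = ∑ t ∈ Finset.Icc 1 T, dist (p (t - 1)) (p t)} = ⨅ χ, cost χ ω :=
    fun ω => sInf_eq_iInf_costAux p₀ T kt (fun t i => r t i ω)
  have hcost_nonneg : ∀ χ ω, 0 ≤ cost χ ω :=
    fun χ ω => Finset.sum_nonneg fun t _ => dist_nonneg
  have hpathmeas : ∀ χ s, Measurable (fun ω => pathAux p₀ T kt (fun t i => r t i ω) χ s) := by
    intro χ s
    unfold pathAux
    by_cases h : s ∈ Finset.Icc 1 T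
    · simp only [dif_pos h]; exact hrmeas s h _
    · simp only [dif_neg h]; exact measurable_const
  have hcostmeas : ∀ χ, Measurable (cost χ) := by
    intro χ
    rw [hcostdef]
    unfold costAux
    exact Finset.measurable_sum _ fun t _ => (hpathmeas χ (t-1)).dist (hpathmeas χ t)
  set f : Ω → ℝ := fun ω => ⨅ χ, cost χ ω with hfdef
  have hfmeas : Measurable f := Measurable.iInf hcostmeas
  have hae : ∀ᵐ ω ∂P, ∀ t ∈ Finset.Icc 1 T, ∀ i, r t i ω ∈ closedBall c R := by
    rw [Filter.eventually_all_finset]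
    intro t ht
    rw [Filter.eventually_all]
    exact hsupp t ht
  have hbound : ∀ᵐ ω ∂P, ‖f ω‖ ≤ 2*R*T := by
    filter_upwards [hae] with ω hω
    set χ₀ := hne.some with hχ₀
    have hmem : ∀ s, pathAux p₀ T kt (fun t i => r t i ω) χ₀ s ∈ closedBall c R := by
      intro s
      unfold pathAux
      by_cases h : s ∈ Finset.Icc 1 T
      · simp only [dif_pos h]; exact hω s h _
      · simp only [dif_neg h]; exact hp₀
    have hub : cost χ₀ ω ≤ 2*R*T := by
      rw [hcostdef]
      unfold costAux
      calc ∑ t ∈ Finset.Icc 1 T, dist (pathAux p₀ T kt (fun t i => r t i ω) χ₀ (t-1))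
            (pathAux p₀ T kt (fun t i => r t i ω) χ₀ t)
          ≤ ∑ _t ∈ Finset.Icc 1 T, (2*R) := by
            refine Finset.sum_le_sum fun t _ => ?_
            have h1 := mem_closedBall.mp (hmem (t-1))
            have h2 := mem_closedBall.mp (hmem t)
            calc dist (pathAux p₀ T kt (fun t i => r t i ω) χ₀ (t-1))
                  (pathAux p₀ T kt (fun t i => r t i ω) χ₀ t)
                ≤ dist (pathAux p₀ T kt (fun t i => r t i ω) χ₀ (t-1)) c
                  + dist c (pathAux p₀ T kt (fun t i => r t i ω) χ₀ t) := dist_triangle _ _ _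
              _ ≤ R + R := by rw [dist_comm c]; exact add_le_add h1 h2
              _ = 2*R := by ring
        _ = 2*R*T := by
            rw [Finset.sum_const, Nat.card_Icc, nsmul_eq_mul]
            simp
            ring
    have h0 : 0 ≤ f ω := le_ciInf fun χ => hcost_nonneg χ ω
    have h1 : f ω ≤ cost χ₀ ω :=
      ciInf_le ⟨0, by rintro x ⟨χ, rfl⟩; exact hcost_nonneg χ ω⟩ χ₀
    rw [Real.norm_eq_abs, abs_of_nonneg h0]
    exact h1.trans hub
  have hf_int : Integrable f P :=
    Integrable.mono' (integrable_const (2*R*(T:ℝ))) hfmeas.aestronglyMeasurable hbound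
  have hg_int : Integrable
      (fun ω => ∑ t ∈ Finset.Icc 1 T, δ * (A t).indicator (fun _ => (1:ℝ)) ω) P :=
    integrable_finset_sum _ fun t ht =>
      ((integrable_const (1:ℝ)).indicator (hAmeas t ht)).const_mul δ
  have hlow : ∀ ω, (∑ t ∈ Finset.Icc 1 T, δ * (A t).indicator (fun _ => (1:ℝ)) ω) ≤ f ω := by
    intro ω
    refine le_ciInf fun χ => ?_
    rw [hcostdef]
    unfold costAux
    refine Finset.sum_le_sum fun t ht => ?_
    by_cases hω : ω ∈ A t
    · rw [Set.indicator_of_mem hω, mul_one]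
      have hpt : pathAux p₀ T kt (fun t i => r t i ω) χ t = r t (χ ⟨t, ht⟩) ω := by
        unfold pathAux; rw [dif_pos ht]
      rcases eq_or_ne t 1 with h1 | h1
      · subst h1
        have hp0 : pathAux p₀ T kt (fun t i => r t i ω) χ (1-1) = p₀ := by
          unfold pathAux
          rw [dif_neg (by simp : (1:ℕ)-1 ∉ Finset.Icc 1 T)]
        rw [hA1] at hω
        rw [hp0, hpt, dist_comm]
        exact (hω _).le
      · have ht2 := Finset.mem_Icc.mp ht
        have ht' : t - 1 ∈ Finset.Icc 1 T := Finset.mem_Icc.mpr ⟨by omega, by omega⟩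
        have hpt' : pathAux p₀ T kt (fun t i => r t i ω) χ (t-1) = r (t-1) (χ ⟨t-1, ht'⟩) ω := by
          unfold pathAux; rw [dif_pos ht']
        rw [hAt t h1] at hω
        rw [hpt, hpt', dist_comm]
        exact (hω _ _).le
    · rw [Set.indicator_of_notMem hω, mul_zero]
      exact dist_nonneg
  have hgval : (∫ ω, (∑ t ∈ Finset.Icc 1 T, δ * (A t).indicator (fun _ => (1:ℝ)) ω) ∂P)
      = ∑ t ∈ Finset.Icc 1 T, δ * (P (A t)).toReal := by
    rw [integral_finset_sum _ fun t ht =>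
      ((integrable_const (1:ℝ)).indicator (hAmeas t ht)).const_mul δ]
    refine Finset.sum_congr rfl fun t ht => ?_
    rw [integral_const_mul, integral_indicator_const (1:ℝ) (hAmeas t ht), smul_eq_mul, mul_one, measureReal_def]
  calc (δ / 2) * T = ∑ _t ∈ Finset.Icc 1 T, δ * (1/2) := by
        rw [Finset.sum_const, Nat.card_Icc, nsmul_eq_mul]
        simp
        ring
    _ ≤ ∑ t ∈ Finset.Icc 1 T, δ * (P (A t)).toReal :=
        Finset.sum_le_sum fun t ht => mul_le_mul_of_nonneg_left (hPA t ht) hδ0.le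
    _ = ∫ ω, (∑ t ∈ Finset.Icc 1 T, δ * (A t).indicator (fun _ => (1:ℝ)) ω) ∂P := hgval.symm
    _ ≤ ∫ ω, f ω ∂P := integral_mono hg_int hf_int hlow
    _ = ∫ ω, sInf {x : ℝ | ∃ p : ℕ → E, p 0 = p₀ ∧
          (∀ t ∈ Finset.Icc 1 T, ∃ i, p t = r t i ω) ∧
          x = ∑ t ∈ Finset.Icc 1 T, dist (p (t - 1)) (p t)} ∂P :=
        integral_congr_ae (Filter.Eventually.of_forall fun ω => (hinf ω).symm)
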